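/- Let x̄ ∈ ⋂_{i=1}^∞ Ω_i be a contingent local extremal point of a countable system of closed sets {Ω_i}_{i∈ℕ} in ℝⁿ whose contingent cones satisfy ⋂_{i=1}^∞ T(x̄;Ω_i) = {0}. Then there exist x*_i ∈ N(0;T(x̄;Ω_i)) ⊆ N(x̄;Ω_i), i ∈ ℕ, with Σ_{i=1}^∞ 2^{-i} x*_i = 0 and Σ_{i=1}^∞ 2^{-i} ‖x*_i‖² = 1. -/

import Mathlib

open Filter Topology

variable {E : Type*} [NormedAddCommGroup E] [InnerProductSpace ℝ E]

/-- `Λ` is a cone: closed under multiplication by nonnegative scalars. -/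
def IsConeSet (Λ : Set E) : Prop := ∀ t : ℝ, 0 ≤ t → ∀ v ∈ Λ, t • v ∈ Λ

/-- The translate `S - a = {x | x + a ∈ S}`. -/
def Set.translate (S : Set E) (a : E) : Set E := {x | x + a ∈ S}

/-- `v` is a Fréchet `ε`-normal to `Ω` at `x₀` (normals identified with vectors
via the inner product). -/
def IsEpsNormal (ε : ℝ) (v : E) (Ω : Set E) (x₀ : E) : Prop :=
  ∀ η > 0, ∃ δ > 0, ∀ x ∈ Ω, ‖x - x₀‖ < δ → (inner ℝ v (x - x₀) : ℝ) ≤ (ε + η) * ‖x - x₀‖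

/-- The Fréchet (regular) normal cone to `Ω` at `x₀`. -/
def frechetNormalCone (Ω : Set E) (x₀ : E) : Set E := {v | IsEpsNormal 0 v Ω x₀}

/-- The Mordukhovich limiting normal cone to `Ω` at `x₀`: limits of Fréchet
`ε_k`-normals at points `x_k → x₀` of `Ω` with `ε_k ↓ 0`. -/
def limitingNormalCone (Ω : Set E) (x₀ : E) : Set E :=
  {v | ∃ (ε : ℕ → ℝ) (x : ℕ → E) (w : ℕ → E),
    (∀ k, 0 ≤ ε k) ∧ Tendsto ε atTop (𝓝 0) ∧
    (∀ k, x k ∈ Ω) ∧ Tendsto x atTop (𝓝 x₀) ∧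
    Tendsto w atTop (𝓝 v) ∧ (∀ k, IsEpsNormal (ε k) (w k) Ω (x k))}

/-- The Bouligand–Severi contingent cone `T(x₀;Ω)`. -/
def contingentCone {E : Type*} [NormedAddCommGroup E] [NormedSpace ℝ E]
    (x₀ : E) (Ω : Set E) : Set E :=
  {v | ∃ (t : ℕ → ℝ) (w : ℕ → E), (∀ k, 0 < t k) ∧ Tendsto t atTop (𝓝 0) ∧
    Tendsto w atTop (𝓝 v) ∧ ∀ k, x₀ + t k • w k ∈ Ω}

section AuxLemmas
open Metric
variable {x₀ : E} {Ω : Set E}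

lemma zero_mem_contingentCone (h : x₀ ∈ Ω) : (0 : E) ∈ contingentCone x₀ Ω := by
  refine ⟨fun k => 1 / (k + 1), fun _ => 0, fun k => by positivity,
    tendsto_one_div_add_atTop_nhds_zero_nat, tendsto_const_nhds, fun k => by simpa using h⟩

lemma isConeSet_contingentCone (h : x₀ ∈ Ω) : IsConeSet (contingentCone x₀ Ω) := by
  intro t ht v hv
  rcases eq_or_lt_of_le ht with rfl | ht
  · simpa using zero_mem_contingentCone h
  · obtain ⟨ts, w, hts, hts0, hw, hmem⟩ := hv
    refine ⟨fun k => ts k / t, fun k => t • w k, fun k => div_pos (hts k) ht,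
      by simpa using hts0.div_const t, hw.const_smul t, fun k => ?_⟩
    have : (ts k / t) • (t • w k) = ts k • w k := by
      rw [smul_smul, div_mul_cancel₀ _ (ne_of_gt ht)]
    rw [this]; exact hmem k

lemma isClosed_contingentCone [CompleteSpace E] : IsClosed (contingentCone x₀ Ω) := by
  refine IsSeqClosed.isClosed ?_
  intro vs v hmem hlim
  have key : ∀ j : ℕ, ∃ p : ℝ × E, 0 < p.1 ∧ p.1 < 1 / (j + 1) ∧ ‖p.2 - vs j‖ < 1 / (j + 1) ∧
      x₀ + p.1 • p.2 ∈ Ω := by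
    intro j
    obtain ⟨ts, w, hts, hts0, hw, hm⟩ := hmem j
    have h1 : ∀ᶠ k in atTop, ts k < 1 / (j + 1) := by
      have : (0:ℝ) < 1 / (j+1) := by positivity
      exact hts0.eventually_lt_const this
    have h2 : ∀ᶠ k in atTop, ‖w k - vs j‖ < 1 / (j + 1) := by
      have hpos : (0:ℝ) < 1 / (j+1) := by positivity
      have hn : Tendsto (fun k => ‖w k - vs j‖) atTop (𝓝 0) :=
        tendsto_iff_norm_sub_tendsto_zero.mp hw
      exact hn.eventually_lt_const hpos
    obtain ⟨k, hk1, hk2⟩ := (h1.and h2).exists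
    exact ⟨(ts k, w k), hts k, hk1, hk2, hm k⟩
  choose p hp1 hp2 hp3 hp4 using key
  refine ⟨fun j => (p j).1, fun j => (p j).2, hp1, ?_, ?_, hp4⟩
  · refine squeeze_zero (fun j => le_of_lt (hp1 j)) (fun j => le_of_lt (hp2 j))
      tendsto_one_div_add_atTop_nhds_zero_nat
  · rw [tendsto_iff_norm_sub_tendsto_zero]
    refine squeeze_zero (g := fun j => 1 / (j+1) + ‖vs j - v‖) (fun j => norm_nonneg _) (fun j => ?_) ?_
    · calc ‖(p j).2 - v‖ ≤ ‖(p j).2 - vs j‖ + ‖vs j - v‖ := by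
            simpa using norm_sub_le_norm_sub_add_norm_sub ((p j).2) (vs j) v
        _ ≤ 1 / (j + 1) + ‖vs j - v‖ := by linarith [hp3 j]
    · have h1 := tendsto_one_div_add_atTop_nhds_zero_nat (𝕜 := ℝ)
      have h2 : Tendsto (fun j => ‖vs j - v‖) atTop (𝓝 0) := by
        rw [← tendsto_iff_norm_sub_tendsto_zero] at *; exact hlim
      simpa using h1.add h2

lemma infDist_smul_cone_le {Λ : Set E} (hΛ : IsConeSet Λ) (h0 : (0:E) ∈ Λ)
    {t : ℝ} (ht : 0 < t) (x : E) : infDist (t • x) Λ ≤ t * infDist x Λ := by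
  refine le_of_forall_pos_le_add fun ε hε => ?_
  have hne : Λ.Nonempty := ⟨0, h0⟩
  have h1 : infDist x Λ < infDist x Λ + ε / t := lt_add_of_pos_right _ (by positivity)
  obtain ⟨y, hy, hxy⟩ := (infDist_lt_iff hne).mp h1
  calc infDist (t • x) Λ ≤ dist (t • x) (t • y) := infDist_le_dist_of_mem (hΛ t ht.le y hy)
    _ = t * dist x y := by rw [dist_smul₀, Real.norm_of_nonneg ht.le]
    _ ≤ t * (infDist x Λ + ε / t) := by nlinarith
    _ = t * infDist x Λ + ε := by field_simp

lemma infDist_smul_cone {Λ : Set E} (hΛ : IsConeSet Λ) (h0 : (0:E) ∈ Λ)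
    {t : ℝ} (ht : 0 < t) (x : E) : infDist (t • x) Λ = t * infDist x Λ := by
  refine le_antisymm (infDist_smul_cone_le hΛ h0 ht x) ?_
  have h2 := infDist_smul_cone_le hΛ h0 (t := t⁻¹) (by positivity) (t • x)
  rw [inv_smul_smul₀ ht.ne'] at h2
  calc t * infDist x Λ ≤ t * (t⁻¹ * infDist (t • x) Λ) := by nlinarith
    _ = infDist (t • x) Λ := by field_simp

lemma prox_of_nearest {S : Set E} {u w : E} (hmin : ∀ x ∈ S, dist u w ≤ dist u x) :
    ∀ x ∈ S, (inner ℝ (u - w) (x - w) : ℝ) ≤ ‖x - w‖ ^ 2 / 2 := by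
  intro x hx
  have h := hmin x hx
  rw [dist_eq_norm, dist_eq_norm] at h
  have hexp : ‖u - x‖ ^ 2 = ‖u - w‖ ^ 2 - 2 * (inner ℝ (u - w) (x - w) : ℝ) + ‖x - w‖ ^ 2 := by
    have : u - x = (u - w) - (x - w) := by abel
    rw [this, norm_sub_sq_real]
  nlinarith [norm_nonneg (u - x), norm_nonneg (u - w), sq_nonneg (‖u-x‖ - ‖u-w‖)]

lemma isEpsNormal_of_prox {S : Set E} {v w : E} {K : ℝ} (hK : 0 < K)
    (h : ∀ x ∈ S, (inner ℝ v (x - w) : ℝ) ≤ K * ‖x - w‖ ^ 2) : IsEpsNormal 0 v S w := by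
  intro η hη
  refine ⟨η / K, by positivity, fun x hx hxd => ?_⟩
  have := h x hx
  have hn : (0:ℝ) ≤ ‖x - w‖ := norm_nonneg _
  have h2 : K * ‖x - w‖ ≤ η := by
    have := mul_lt_mul_of_pos_left hxd hK
    rw [mul_div_cancel₀ _ hK.ne'] at this
    linarith
  nlinarith

lemma mem_limitingNormalCone_zero_of_prox {Λ : Set E} (hcone : IsConeSet Λ)
    {w v : E} (hw : w ∈ Λ) {K : ℝ} (hK : 0 < K)
    (hprox : ∀ x ∈ Λ, (inner ℝ v (x - w) : ℝ) ≤ K * ‖x - w‖ ^ 2) :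
    v ∈ limitingNormalCone Λ 0 := by
  refine ⟨fun _ => 0, fun k => ((k : ℝ) + 1)⁻¹ • w, fun _ => v, fun _ => le_refl _,
    tendsto_const_nhds, fun k => hcone _ (by positivity) w hw, ?_, tendsto_const_nhds, ?_⟩
  · have h1 : Tendsto (fun k : ℕ => ((k : ℝ) + 1)⁻¹) atTop (𝓝 0) := by
      simpa only [one_div] using tendsto_one_div_add_atTop_nhds_zero_nat (𝕜 := ℝ)
    simpa using h1.smul_const w
  · intro k
    refine isEpsNormal_of_prox (K := ((k : ℝ) + 1) * K) (by positivity) fun x hx => ?_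
    set m : ℝ := (k : ℝ) + 1 with hm
    have hm0 : (0:ℝ) < m := by positivity
    have hxm : m • x ∈ Λ := hcone m hm0.le x hx
    have h2 := hprox (m • x) hxm
    have key : m • x - w = m • (x - m⁻¹ • w) := by
      rw [smul_sub, smul_inv_smul₀ hm0.ne']
    rw [key, real_inner_smul_right, norm_smul, Real.norm_of_nonneg hm0.le, mul_pow] at h2
    have := mul_le_mul_of_nonneg_left h2 (le_of_lt (inv_pos.mpr hm0))
    rw [← mul_assoc, inv_mul_cancel₀ hm0.ne', one_mul] at this
    calc (inner ℝ v (x - m⁻¹ • w) : ℝ) ≤ m⁻¹ * (K * (m ^ 2 * ‖x - m⁻¹ • w‖ ^ 2)) := this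
      _ = m * K * ‖x - m⁻¹ • w‖ ^ 2 := by field_simp

lemma sigma_hasSum : HasSum (fun i : ℕ => ((1:ℝ)/2)^(i+1)) 1 := by
  have h := hasSum_geometric_of_lt_one (r := (1/2:ℝ)) (by norm_num) (by norm_num)
  have h2 := h.mul_left (1/2 : ℝ)
  norm_num at h2
  convert h2 using 2 with i
  · rfl
  · ring

lemma sigma_pos (i : ℕ) : (0:ℝ) < ((1:ℝ)/2)^(i+1) := by positivity

lemma summable_weighted (S : ℕ → Set E) (hS0 : ∀ i, (0:E) ∈ S i) (b : ℕ → E) (M : ℝ)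
    (hMb : ∀ i, ‖b i‖ ≤ M) (x : E) :
    Summable (fun i => ((1:ℝ)/2)^(i+1) * (infDist (x + b i) (S i))^2) := by
  have hs : Summable (fun i : ℕ => ((1:ℝ)/2)^(i+1) * (‖x‖ + M)^2) :=
    sigma_hasSum.summable.mul_right _
  refine Summable.of_nonneg_of_le (fun i => by positivity) (fun i => ?_) hs
  have h1 : infDist (x + b i) (S i) ≤ ‖x‖ + M := by
    calc infDist (x + b i) (S i) ≤ dist (x + b i) 0 := infDist_le_dist_of_mem (hS0 i)
      _ = ‖x + b i‖ := by rw [dist_zero_right]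
      _ ≤ ‖x‖ + ‖b i‖ := norm_add_le _ _
      _ ≤ ‖x‖ + M := by linarith [hMb i]
  have h2 : (0:ℝ) ≤ infDist (x + b i) (S i) := infDist_nonneg
  exact mul_le_mul_of_nonneg_left (pow_le_pow_left₀ h2 h1 2) (sigma_pos i).le

lemma key_lipschitz (S : ℕ → Set E) (hS0 : ∀ i, (0:E) ∈ S i) (b : ℕ → E) (M : ℝ)
    (hMb : ∀ i, ‖b i‖ ≤ M) (x y : E) :
    (∑' i, ((1:ℝ)/2)^(i+1) * (infDist (x + b i) (S i))^2) ≤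
      (∑' i, ((1:ℝ)/2)^(i+1) * (infDist (y + b i) (S i))^2)
        + (‖x‖ + ‖y‖ + 2*M) * ‖x - y‖ := by
  have hsx := summable_weighted S hS0 b M hMb x
  have hsy := summable_weighted S hS0 b M hMb y
  have hterm : ∀ i, ((1:ℝ)/2)^(i+1) * (infDist (x + b i) (S i))^2 ≤
      ((1:ℝ)/2)^(i+1) * (infDist (y + b i) (S i))^2
        + ((1:ℝ)/2)^(i+1) * ((‖x‖ + ‖y‖ + 2*M) * ‖x - y‖) := by
    intro i
    set dx := infDist (x + b i) (S i)
    set dy := infDist (y + b i) (S i)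
    have hdx0 : 0 ≤ dx := infDist_nonneg
    have hdy0 : 0 ≤ dy := infDist_nonneg
    have hdxb : dx ≤ ‖x‖ + M := by
      calc dx ≤ dist (x + b i) 0 := infDist_le_dist_of_mem (hS0 i)
        _ = ‖x + b i‖ := by rw [dist_zero_right]
        _ ≤ ‖x‖ + M := le_trans (norm_add_le _ _) (by linarith [hMb i])
    have hdyb : dy ≤ ‖y‖ + M := by
      calc dy ≤ dist (y + b i) 0 := infDist_le_dist_of_mem (hS0 i)
        _ = ‖y + b i‖ := by rw [dist_zero_right]
        _ ≤ ‖y‖ + M := le_trans (norm_add_le _ _) (by linarith [hMb i])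
    have hlip : dx ≤ dy + ‖x - y‖ := by
      calc dx ≤ dy + dist (x + b i) (y + b i) := infDist_le_infDist_add_dist
        _ = dy + ‖x - y‖ := by rw [dist_eq_norm]; congr 2; abel
    have hσ := (sigma_pos i).le
    have hM0 : 0 ≤ M := le_trans (norm_nonneg _) (hMb 0)
    have hxy0 : (0:ℝ) ≤ ‖x - y‖ := norm_nonneg _
    have : dx^2 ≤ dy^2 + (‖x‖ + ‖y‖ + 2*M) * ‖x - y‖ := by nlinarith
    nlinarith
  calc (∑' i, ((1:ℝ)/2)^(i+1) * (infDist (x + b i) (S i))^2)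
      ≤ ∑' i, (((1:ℝ)/2)^(i+1) * (infDist (y + b i) (S i))^2
          + ((1:ℝ)/2)^(i+1) * ((‖x‖ + ‖y‖ + 2*M) * ‖x - y‖)) := by
        refine Summable.tsum_le_tsum hterm hsx (hsy.add ?_)
        exact sigma_hasSum.summable.mul_right _
    _ = (∑' i, ((1:ℝ)/2)^(i+1) * (infDist (y + b i) (S i))^2)
        + ∑' i, ((1:ℝ)/2)^(i+1) * ((‖x‖ + ‖y‖ + 2*M) * ‖x - y‖) := by
        exact Summable.tsum_add hsy (sigma_hasSum.summable.mul_right _)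
    _ = _ := by
        congr 1
        rw [tsum_mul_right, sigma_hasSum.tsum_eq, one_mul]

lemma continuous_weighted (S : ℕ → Set E) (hS0 : ∀ i, (0:E) ∈ S i) (b : ℕ → E) (M : ℝ)
    (hMb : ∀ i, ‖b i‖ ≤ M) :
    Continuous (fun x : E => ∑' i, ((1:ℝ)/2)^(i+1) * (infDist (x + b i) (S i))^2) := by
  rw [continuous_iff_continuousAt]
  intro x
  rw [Metric.continuousAt_iff]
  intro ε hε
  have hM0 : 0 ≤ M := le_trans (norm_nonneg _) (hMb 0)
  set L : ℝ := 2*‖x‖ + 2*M + 1 with hLdef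
  have hL : 0 < L := by positivity
  refine ⟨min 1 (ε / (L + 1)), lt_min one_pos (by positivity), fun {y} hy => ?_⟩
  rw [Real.dist_eq]
  have hyx : ‖y - x‖ < min 1 (ε / (L + 1)) := by rwa [dist_eq_norm] at hy
  have hyx1 : ‖y - x‖ < 1 := lt_of_lt_of_le hyx (min_le_left _ _)
  have hyx2 : ‖y - x‖ < ε / (L + 1) := lt_of_lt_of_le hyx (min_le_right _ _)
  have hyb : ‖y‖ ≤ ‖x‖ + 1 := by
    calc ‖y‖ = ‖x + (y - x)‖ := by congr 1; abel
      _ ≤ ‖x‖ + ‖y - x‖ := norm_add_le _ _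
      _ ≤ ‖x‖ + 1 := by linarith
  have h1 := key_lipschitz S hS0 b M hMb y x
  have h2 := key_lipschitz S hS0 b M hMb x y
  have hLb : ‖x‖ + ‖y‖ + 2*M ≤ L := by rw [hLdef]; linarith
  have hxy0 : (0:ℝ) ≤ ‖x - y‖ := norm_nonneg _
  have hnrev : ‖x - y‖ = ‖y - x‖ := norm_sub_rev _ _
  have hbound : (‖x‖ + ‖y‖ + 2*M) * ‖x - y‖ < ε := by
    have h5 : (‖x‖ + ‖y‖ + 2*M) * ‖x - y‖ ≤ L * ‖y - x‖ := by
      rw [hnrev]; exact mul_le_mul_of_nonneg_right hLb (by rw [← hnrev]; exact hxy0)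
    have h3 : L * ‖y - x‖ < L * (ε / (L+1)) := by
      rcases eq_or_lt_of_le (norm_nonneg (y - x)) with h|h
      · rw [← h]; simp; positivity
      · exact mul_lt_mul_of_pos_left hyx2 hL
    have h4 : L * (ε / (L+1)) < ε := by
      rw [mul_div_assoc', div_lt_iff₀ (by positivity : (0:ℝ) < L + 1)]
      nlinarith
    exact lt_of_le_of_lt h5 (lt_trans h3 h4)
  rw [abs_sub_lt_iff]
  constructor
  · have := h1
    rw [norm_sub_rev] at this
    linarith
  · linarith

lemma mem_limitingNormalCone_of_prox_contingent [ProperSpace E]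
    {Ω : Set E} {x₀ : E} (hΩc : IsClosed Ω) (hx₀ : x₀ ∈ Ω) {w v : E}
    (hw : w ∈ contingentCone x₀ Ω) {K : ℝ} (hK : 0 < K)
    (hprox : ∀ x ∈ contingentCone x₀ Ω, (inner ℝ v (x - w) : ℝ) ≤ K * ‖x - w‖ ^ 2) :
    v ∈ limitingNormalCone Ω x₀ := by
  set c : ℝ := (4 * K)⁻¹ with hcdef
  have hc : 0 < c := by positivity
  set u' : E := w + c • v with hu'def
  have I1 : ∀ x ∈ contingentCone x₀ Ω,
      ‖x - w‖ ^ 2 / 2 + c ^ 2 * ‖v‖ ^ 2 ≤ ‖u' - x‖ ^ 2 := by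
    intro x hx
    have h1 : u' - x = -((x - w) - c • v) := by rw [hu'def]; abel
    have h2 : ‖u' - x‖ ^ 2 = ‖x - w‖ ^ 2 - 2 * (inner ℝ (x - w) (c • v) : ℝ) + ‖c • v‖ ^ 2 := by
      rw [h1, norm_neg, norm_sub_sq_real]
    have h3 : (inner ℝ (x - w) (c • v) : ℝ) = c * (inner ℝ v (x - w) : ℝ) := by
      rw [real_inner_smul_right, real_inner_comm]
    have h4 : ‖c • v‖ ^ 2 = c ^ 2 * ‖v‖ ^ 2 := by
      rw [norm_smul, Real.norm_of_nonneg hc.le, mul_pow]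
    have h5 := hprox x hx
    have hcK : 2 * (c * K) = 1 / 2 := by rw [hcdef]; field_simp; ring
    nlinarith [mul_le_mul_of_nonneg_left h5 hc.le]
  obtain ⟨ts, u, hts, hts0, hu, humem⟩ := hw
  set z : ℕ → E := fun k => x₀ + ts k • u' with hzdef
  have hnear : ∀ k, ∃ y ∈ Ω, infDist (z k) Ω = dist (z k) y :=
    fun k => hΩc.exists_infDist_eq_dist ⟨x₀, hx₀⟩ (z k)
  choose y hyΩ hyd using hnear
  set e : ℕ → ℝ := fun k => ‖w - u k‖ with hedef
  have he : Tendsto e atTop (𝓝 0) := by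
    have := tendsto_iff_norm_sub_tendsto_zero.mp hu
    simpa [hedef, norm_sub_rev] using this
  have he0 : ∀ k, 0 ≤ e k := fun k => norm_nonneg _
  set w' : ℕ → E := fun k => (ts k)⁻¹ • (y k - x₀) with hw'def
  have htsw' : ∀ k, ts k • w' k = y k - x₀ := by
    intro k; rw [hw'def]; exact smul_inv_smul₀ (hts k).ne' _
  have hzw : ∀ k, ts k • (u' - w' k) = z k - y k := by
    intro k
    rw [smul_sub, htsw', hzdef]; beta_reduce; abel
  have hdist : ∀ k, ‖z k - y k‖ ≤ ts k * (c * ‖v‖ + e k) := by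
    intro k
    have h1 : ‖z k - y k‖ = dist (z k) (y k) := by rw [dist_eq_norm]
    have h2 : dist (z k) (y k) ≤ dist (z k) (x₀ + ts k • u k) :=
      (hyd k) ▸ infDist_le_dist_of_mem (humem k)
    have h3 : dist (z k) (x₀ + ts k • u k) = ‖ts k • (u' - u k)‖ := by
      rw [dist_eq_norm, hzdef]
      congr 1
      rw [smul_sub]; beta_reduce; abel
    have h4 : ‖ts k • (u' - u k)‖ = ts k * ‖u' - u k‖ := by
      rw [norm_smul, Real.norm_of_nonneg (hts k).le]
    have h5 : ‖u' - u k‖ ≤ c * ‖v‖ + e k := by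
      calc ‖u' - u k‖ = ‖c • v + (w - u k)‖ := by rw [hu'def]; congr 1; abel
        _ ≤ ‖c • v‖ + ‖w - u k‖ := norm_add_le _ _
        _ = c * ‖v‖ + e k := by rw [norm_smul, Real.norm_of_nonneg hc.le, hedef]
    calc ‖z k - y k‖ = dist (z k) (y k) := h1
      _ ≤ ‖ts k • (u' - u k)‖ := by rw [← h3]; exact h2
      _ = ts k * ‖u' - u k‖ := h4
      _ ≤ ts k * (c * ‖v‖ + e k) := by
          exact mul_le_mul_of_nonneg_left h5 (hts k).le
  have hb : ∀ k, ‖u' - w' k‖ ≤ c * ‖v‖ + e k := by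
    intro k
    have h1 : ts k * ‖u' - w' k‖ = ‖z k - y k‖ := by
      rw [← hzw k, norm_smul, Real.norm_of_nonneg (hts k).le]
    have := hdist k
    rw [← h1] at this
    exact le_of_mul_le_mul_left this (hts k)
  have hyx : Tendsto y atTop (𝓝 x₀) := by
    rw [tendsto_iff_norm_sub_tendsto_zero]
    refine squeeze_zero (g := fun k => ts k * (c * ‖v‖ + e k + ‖u'‖))
      (fun k => norm_nonneg _) (fun k => ?_) ?_
    · calc ‖y k - x₀‖ ≤ ‖y k - z k‖ + ‖z k - x₀‖ := by
            simpa using norm_sub_le_norm_sub_add_norm_sub (y k) (z k) x₀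
        _ ≤ ts k * (c * ‖v‖ + e k) + ts k * ‖u'‖ := by
            refine add_le_add ?_ ?_
            · rw [norm_sub_rev]; exact hdist k
            · have : z k - x₀ = ts k • u' := by
                simp only [hzdef]; exact add_sub_cancel_left x₀ _
              rw [this, norm_smul, Real.norm_of_nonneg (hts k).le]
        _ = ts k * (c * ‖v‖ + e k + ‖u'‖) := by ring
    · have : Tendsto (fun k => c * ‖v‖ + e k + ‖u'‖) atTop (𝓝 (c * ‖v‖ + 0 + ‖u'‖)) :=
        (tendsto_const_nhds.add he).add tendsto_const_nhds
      simpa using hts0.mul this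
  obtain ⟨E0, hE0⟩ : ∃ E0, ∀ k, e k ≤ E0 := by
    obtain ⟨E0, hE0⟩ := he.bddAbove_range
    exact ⟨E0, fun k => hE0 ⟨k, rfl⟩⟩
  set B : ℝ := ‖u'‖ + c * ‖v‖ + E0 with hBdef
  have hB : ∀ k, w' k ∈ closedBall (0 : E) B := by
    intro k
    rw [mem_closedBall, dist_zero_right]
    calc ‖w' k‖ = ‖u' - (u' - w' k)‖ := by congr 1; abel
      _ ≤ ‖u'‖ + ‖u' - w' k‖ := norm_sub_le _ _
      _ ≤ ‖u'‖ + (c * ‖v‖ + e k) := by linarith [hb k]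
      _ ≤ B := by rw [hBdef]; linarith [hE0 k]
  have hw'w : Tendsto w' atTop (𝓝 w) := by
    refine tendsto_of_subseq_tendsto fun ns hns => ?_
    obtain ⟨a, -, φ, hφ, hconv⟩ :=
      tendsto_subseq_of_bounded (isBounded_closedBall (x := (0:E)) (r := B))
        (fun n => hB (ns n))
    have hcomp : Tendsto (fun n => w' (ns (φ n))) atTop (𝓝 a) := hconv
    have haT : a ∈ contingentCone x₀ Ω := by
      refine ⟨fun n => ts (ns (φ n)), fun n => w' (ns (φ n)), fun n => hts _,
        hts0.comp (hns.comp hφ.tendsto_atTop), hcomp, fun n => ?_⟩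
      have := htsw' (ns (φ n))
      have h2 : x₀ + ts (ns (φ n)) • w' (ns (φ n)) = y (ns (φ n)) := by
        rw [this]; abel
      rw [h2]; exact hyΩ _
    have hua : ‖u' - a‖ ≤ c * ‖v‖ := by
      have h1 : Tendsto (fun n => ‖u' - w' (ns (φ n))‖) atTop (𝓝 ‖u' - a‖) :=
        (tendsto_const_nhds.sub hcomp).norm
      have h2 : Tendsto (fun n => c * ‖v‖ + e (ns (φ n))) atTop (𝓝 (c * ‖v‖ + 0)) :=
        tendsto_const_nhds.add (he.comp (hns.comp hφ.tendsto_atTop))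
      have := le_of_tendsto_of_tendsto' h1 h2 (fun n => hb _)
      simpa using this
    have haw : a = w := by
      have h1 := I1 a haT
      have h2 : ‖u' - a‖ ^ 2 ≤ (c * ‖v‖) ^ 2 := by
        have := mul_self_le_mul_self (norm_nonneg _) hua
        simpa [pow_two] using this
      have h3 : ‖a - w‖ ^ 2 ≤ 0 := by nlinarith
      have h4 : ‖a - w‖ = 0 := by
        have := sq_nonneg ‖a - w‖
        have h5 : ‖a - w‖ ^ 2 = 0 := le_antisymm h3 this
        exact pow_eq_zero_iff (n := 2) (by norm_num) |>.mp h5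
      exact sub_eq_zero.mp (norm_eq_zero.mp h4)
    exact ⟨φ, by rwa [haw] at hcomp⟩
  set vk : ℕ → E := fun k => c⁻¹ • (u' - w' k) with hvkdef
  have hvk : Tendsto vk atTop (𝓝 v) := by
    have h1 : Tendsto (fun k => c⁻¹ • (u' - w' k)) atTop (𝓝 (c⁻¹ • (u' - w))) :=
      (tendsto_const_nhds.sub hw'w).const_smul _
    have h2 : c⁻¹ • (u' - w) = v := by
      rw [hu'def]
      simp [smul_smul, inv_mul_cancel₀ hc.ne']
    rwa [h2] at h1
  have hnormal : ∀ k, IsEpsNormal 0 (vk k) Ω (y k) := by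
    intro k
    have hmin : ∀ x ∈ Ω, dist (z k) (y k) ≤ dist (z k) x :=
      fun x hx => (hyd k) ▸ infDist_le_dist_of_mem hx
    have hpx := prox_of_nearest hmin
    refine isEpsNormal_of_prox (K := (2 * (c * ts k))⁻¹)
      (inv_pos.mpr (mul_pos two_pos (mul_pos hc (hts k)))) fun x hx => ?_
    have hvkeq : vk k = (c * ts k)⁻¹ • (z k - y k) := by
      have h9 : (c * ts k)⁻¹ • (z k - y k) = (c⁻¹ * ((ts k)⁻¹ * ts k)) • (u' - w' k) := by
        rw [← hzw k, smul_smul, mul_inv, mul_assoc]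
      rw [h9, inv_mul_cancel₀ (hts k).ne', mul_one, hvkdef]
    rw [hvkeq, real_inner_smul_left]
    have h1 := hpx x hx
    have h2 : (0:ℝ) ≤ (c * ts k)⁻¹ := le_of_lt (inv_pos.mpr (mul_pos hc (hts k)))
    calc (c * ts k)⁻¹ * (inner ℝ (z k - y k) (x - y k) : ℝ)
        ≤ (c * ts k)⁻¹ * (‖x - y k‖ ^ 2 / 2) := mul_le_mul_of_nonneg_left h1 h2
      _ = (2 * (c * ts k))⁻¹ * ‖x - y k‖ ^ 2 := by
          rw [mul_inv]; ring
  exact ⟨fun _ => 0, y, vk, fun _ => le_refl _, tendsto_const_nhds, hyΩ, hyx, hvk, hnormal⟩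

theorem aux_main [Nontrivial E] [FiniteDimensional ℝ E]
    (Ω : ℕ → Set E) (hΩ : ∀ i, IsClosed (Ω i))
    (x₀ : E) (hx₀ : ∀ i, x₀ ∈ Ω i)
    (a : ℕ → E) (M : ℝ) (hM : ∀ i, ‖a i‖ ≤ M)
    (hempty : ⋂ i, (contingentCone x₀ (Ω i)).translate (a i) = ∅)
    (hnonover : ⋂ i, contingentCone x₀ (Ω i) = {0}) :
    ∃ x : ℕ → E,
      (∀ i, x i ∈ limitingNormalCone (contingentCone x₀ (Ω i)) 0) ∧
      (∀ i, x i ∈ limitingNormalCone (Ω i) x₀) ∧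
      HasSum (fun i => (1 / 2 ^ (i + 1) : ℝ) • x i) 0 ∧
      HasSum (fun i => (1 / 2 ^ (i + 1) : ℝ) * ‖x i‖ ^ 2) 1 := by
  classical
  haveI : ProperSpace E := FiniteDimensional.proper ℝ E
  set T : ℕ → Set E := fun i => contingentCone x₀ (Ω i) with hTdef
  have hT0 : ∀ i, (0:E) ∈ T i := fun i => zero_mem_contingentCone (hx₀ i)
  have hTcone : ∀ i, IsConeSet (T i) := fun i => isConeSet_contingentCone (hx₀ i)
  have hTclosed : ∀ i, IsClosed (T i) := fun i => isClosed_contingentCone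
  have hM0 : (0:ℝ) ≤ M := le_trans (norm_nonneg _) (hM 0)
  set σ : ℕ → ℝ := fun i => ((1:ℝ)/2)^(i+1) with hσdef
  have hσs : Summable σ := sigma_hasSum.summable
  set F : E → ℝ := fun x => ∑' i, σ i * (infDist (x + a i) (T i))^2 with hFdef
  set ψ : E → ℝ := fun x => ∑' i, σ i * (infDist (x + (0:E)) (T i))^2 with hψdef
  have hFsum : ∀ x : E, Summable (fun i => σ i * (infDist (x + a i) (T i))^2) :=
    fun x => summable_weighted T hT0 a M hM x
  have hψsum : ∀ x : E, Summable (fun i => σ i * (infDist (x + (0:E)) (T i))^2) :=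
    fun x => summable_weighted T hT0 (fun _ => 0) 0 (by simp) x
  have hFcont : Continuous F := continuous_weighted T hT0 a M hM
  have hψcont : Continuous ψ := continuous_weighted T hT0 (fun _ => 0) 0 (by simp)
  have hF0le : ∀ x, 0 ≤ F x := fun x => tsum_nonneg (fun i => by positivity)
  have hψ0le : ∀ x, 0 ≤ ψ x := fun x => tsum_nonneg (fun i => by positivity)
  -- minimum of ψ on the unit sphere
  obtain ⟨θ₀, hθ₀mem, hθ₀min⟩ := (isCompact_sphere (0:E) 1).exists_isMinOn
    (NormedSpace.sphere_nonempty.mpr zero_le_one) hψcont.continuousOn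
  set cc : ℝ := ψ θ₀ with hccdef
  have hccpos : 0 < cc := by
    rcases (hψ0le θ₀).lt_or_eq with h|h
    · exact h
    · exfalso
      have hθT : ∀ i, θ₀ ∈ T i := by
        intro i
        have hle := Summable.le_tsum (hψsum θ₀) i (fun j _ => by positivity)
        have hterm0 : σ i * (infDist (θ₀ + (0:E)) (T i))^2 = 0 := by
          have h2 : σ i * (infDist (θ₀ + (0:E)) (T i))^2 ≤ 0 := by
            rw [hψdef] at h; linarith [hle]
          have h3 : 0 ≤ σ i * (infDist (θ₀ + (0:E)) (T i))^2 := by positivity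
          linarith
        have h4 : infDist (θ₀ + (0:E)) (T i) = 0 := by
          have := (mul_eq_zero.mp hterm0).resolve_left (sigma_pos i).ne'
          exact (pow_eq_zero_iff two_ne_zero).mp this
        rw [add_zero] at h4
        exact ((hTclosed i).mem_iff_infDist_zero ⟨0, hT0 i⟩).mpr h4
      have hmem : θ₀ ∈ ⋂ i, T i := Set.mem_iInter.mpr hθT
      rw [hTdef] at hmem
      rw [hnonover] at hmem
      have : θ₀ = 0 := hmem
      have h1 : ‖θ₀‖ = 1 := mem_sphere_zero_iff_norm.mp hθ₀mem
      rw [this, norm_zero] at h1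
      norm_num at h1
  -- homogeneous lower bound
  have hψlower : ∀ x : E, cc * ‖x‖^2 ≤ ψ x := by
    intro x
    rcases eq_or_ne x 0 with rfl|hx
    · simpa using hψ0le 0
    · have ht : (0:ℝ) < ‖x‖ := norm_pos_iff.mpr hx
      set θ : E := ‖x‖⁻¹ • x with hθdef
      have hθ1 : ‖θ‖ = 1 := by
        rw [hθdef]
        simpa using norm_smul_inv_norm (𝕜 := ℝ) hx
      have hθmem : θ ∈ sphere (0:E) 1 := mem_sphere_zero_iff_norm.mpr hθ1
      have hccθ : cc ≤ ψ θ := (isMinOn_iff.mp hθ₀min) θ hθmem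
      have hxθ : x = ‖x‖ • θ := by rw [hθdef, smul_inv_smul₀ ht.ne']
      have hψx : ψ x = ‖x‖^2 * ψ θ := by
        rw [hψdef]
        have hdx : ∀ i, infDist (x + (0:E)) (T i) = ‖x‖ * infDist (θ + (0:E)) (T i) := by
          intro i
          rw [add_zero, add_zero]
          conv_lhs => rw [hxθ]
          exact infDist_smul_cone (hTcone i) (hT0 i) ht θ
        calc (∑' i, σ i * (infDist (x + (0:E)) (T i))^2)
            = ∑' i, ‖x‖^2 * (σ i * (infDist (θ + (0:E)) (T i))^2) := by
              refine tsum_congr fun i => ?_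
              rw [hdx i]; ring
          _ = ‖x‖^2 * ψ θ := by rw [tsum_mul_left]
      rw [hψx]
      have := sq_nonneg ‖x‖
      nlinarith
  -- lower bound of F by ψ
  have hFlower : ∀ x : E, ψ x * 2⁻¹ - M^2 ≤ F x := by
    intro x
    have hterm : ∀ i, σ i * ((infDist (x + (0:E)) (T i))^2 * 2⁻¹ - M^2) ≤
        σ i * (infDist (x + a i) (T i))^2 := by
      intro i
      set g := infDist (x + (0:E)) (T i) with hgdef
      set d := infDist (x + a i) (T i) with hddef
      have hg0 : 0 ≤ g := infDist_nonneg
      have hd0 : 0 ≤ d := infDist_nonneg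
      have hgd : g ≤ d + M := by
        have h1 : g ≤ d + dist (x + (0:E)) (x + a i) := infDist_le_infDist_add_dist
        have h2 : dist (x + (0:E)) (x + a i) = ‖a i‖ := by
          rw [dist_eq_norm]
          have : x + (0:E) - (x + a i) = -(a i) := by abel
          rw [this, norm_neg]
        rw [h2] at h1
        linarith [hM i]
      have hcore : g^2 * 2⁻¹ - M^2 ≤ d^2 := by
        rcases le_or_gt g M with h|h
        · nlinarith [sq_nonneg d]
        · have h1 : g - M ≤ d := by linarith
          have h2 : (g - M)^2 ≤ d^2 := by nlinarith
          nlinarith [sq_nonneg (g - 2*M)]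
      exact mul_le_mul_of_nonneg_left hcore (sigma_pos i).le
    have hs1 : Summable (fun i => σ i * ((infDist (x + (0:E)) (T i))^2 * 2⁻¹ - M^2)) := by
      have e1 : ∀ i, σ i * ((infDist (x + (0:E)) (T i))^2 * 2⁻¹ - M^2)
          = (σ i * (infDist (x + (0:E)) (T i))^2) * 2⁻¹ - σ i * M^2 := fun i => by ring
      exact Summable.congr (((hψsum x).mul_right 2⁻¹).sub (hσs.mul_right (M^2)))
        (fun i => (e1 i).symm)
    have hle := Summable.tsum_le_tsum hterm hs1 (hFsum x)
    have heq : (∑' i, σ i * ((infDist (x + (0:E)) (T i))^2 * 2⁻¹ - M^2)) = ψ x * 2⁻¹ - M^2 := by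
      have e1 : ∀ i, σ i * ((infDist (x + (0:E)) (T i))^2 * 2⁻¹ - M^2)
          = (σ i * (infDist (x + (0:E)) (T i))^2) * 2⁻¹ - σ i * M^2 := fun i => by ring
      rw [tsum_congr e1, Summable.tsum_sub (((hψsum x).mul_right 2⁻¹)) (hσs.mul_right (M^2)),
        tsum_mul_right, tsum_mul_right, sigma_hasSum.tsum_eq, one_mul, hψdef]
    rw [heq] at hle
    exact hle
  -- radius for coercivity
  have hF01 : 0 ≤ F 0 + 1 + M^2 := by nlinarith [hF0le 0, sq_nonneg M]
  set R : ℝ := Real.sqrt (2 * (F 0 + 1 + M^2) / cc) + 1 with hRdef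
  have hR0 : 0 < R := by positivity
  have hcoer : ∀ x : E, R ≤ ‖x‖ → F 0 + 1 ≤ F x := by
    intro x hx
    set D : ℝ := 2 * (F 0 + 1 + M^2) / cc with hDdef
    have hD0 : 0 ≤ D := by positivity
    have h1 : Real.sqrt D ≤ ‖x‖ := by
      have : Real.sqrt D ≤ R := by rw [hRdef]; linarith
      linarith
    have h2 : D ≤ ‖x‖^2 := by
      rw [← Real.sq_sqrt hD0]
      exact pow_le_pow_left₀ (Real.sqrt_nonneg D) h1 2
    have h3 : cc * D = 2*(F 0 + 1 + M^2) := by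
      rw [hDdef]; field_simp
    have h4 : cc * D ≤ cc * ‖x‖^2 := mul_le_mul_of_nonneg_left h2 hccpos.le
    have h5 := hψlower x
    have h6 := hFlower x
    linarith
  -- minimizer
  obtain ⟨xb, hxbmem, hxbmin⟩ := (isCompact_closedBall (0:E) R).exists_isMinOn
    ⟨0, mem_closedBall_self hR0.le⟩ hFcont.continuousOn
  have hglob : ∀ yv : E, F xb ≤ F yv := by
    intro yv
    rcases le_or_gt ‖yv‖ R with h|h
    · exact (isMinOn_iff.mp hxbmin) yv (by rwa [mem_closedBall, dist_zero_right])
    · have h1 := hcoer yv h.le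
      have h0 : F xb ≤ F 0 := (isMinOn_iff.mp hxbmin) 0 (mem_closedBall_self hR0.le)
      linarith
  -- nearest points
  have hnear : ∀ i, ∃ y ∈ T i, infDist (xb + a i) (T i) = dist (xb + a i) y :=
    fun i => (hTclosed i).exists_infDist_eq_dist ⟨0, hT0 i⟩ _
  choose wt hwtmem hwtd using hnear
  set v : ℕ → E := fun i => xb + a i - wt i with hvdef
  have hvnorm : ∀ i, ‖v i‖ = infDist (xb + a i) (T i) := by
    intro i
    rw [hwtd i, dist_eq_norm]
  have hvbound : ∀ i, ‖v i‖ ≤ ‖xb‖ + M := by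
    intro i
    rw [hvnorm i]
    calc infDist (xb + a i) (T i) ≤ dist (xb + a i) 0 := infDist_le_dist_of_mem (hT0 i)
      _ = ‖xb + a i‖ := by rw [dist_zero_right]
      _ ≤ ‖xb‖ + M := le_trans (norm_add_le _ _) (by linarith [hM i])
  -- positivity of the minimum value
  have hFxb0 : 0 < F xb := by
    rcases (hF0le xb).lt_or_eq with h|h
    · exact h
    · exfalso
      have hmemi : ∀ i, xb ∈ (T i).translate (a i) := by
        intro i
        have hle := Summable.le_tsum (hFsum xb) i (fun j _ => by positivity)
        have hterm0 : σ i * (infDist (xb + a i) (T i))^2 = 0 := by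
          have h2 : σ i * (infDist (xb + a i) (T i))^2 ≤ 0 := by
            rw [hFdef] at h; linarith [hle]
          have h3 : 0 ≤ σ i * (infDist (xb + a i) (T i))^2 := by positivity
          linarith
        have h4 : infDist (xb + a i) (T i) = 0 := by
          have := (mul_eq_zero.mp hterm0).resolve_left (sigma_pos i).ne'
          exact (pow_eq_zero_iff two_ne_zero).mp this
        exact ((hTclosed i).mem_iff_infDist_zero ⟨0, hT0 i⟩).mpr h4
      have : xb ∈ ⋂ i, (T i).translate (a i) := Set.mem_iInter.mpr hmemi
      rw [hTdef] at this
      rw [hempty] at this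
      exact this
  set r : ℝ := Real.sqrt (F xb) with hrdef
  have hrpos : 0 < r := Real.sqrt_pos.mpr hFxb0
  have hr2 : r^2 = F xb := Real.sq_sqrt hFxb0.le
  -- the weighted sum of the v i
  have hSsummable : Summable (fun i => σ i • v i) := by
    refine Summable.of_norm_bounded (g := fun i => σ i * (‖xb‖ + M))
      (hσs.mul_right _) (fun i => ?_)
    rw [norm_smul, Real.norm_of_nonneg (sigma_pos i).le]
    exact mul_le_mul_of_nonneg_left (hvbound i) (sigma_pos i).le
  set Sv : E := ∑' i, σ i • v i with hSvdef
  have hSv : HasSum (fun i => σ i • v i) Sv := hSsummable.hasSum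
  -- first-order condition : Sv = 0
  have hinner : ∀ h : E, HasSum (fun i => (inner ℝ h (σ i • v i) : ℝ)) (inner ℝ h Sv : ℝ) :=
    fun h => (innerSL ℝ h).hasSum hSv
  have hkey : ∀ h : E, 0 ≤ ‖h‖^2 + 2 * (inner ℝ h Sv : ℝ) := by
    intro h
    have hBsum : HasSum (fun i => σ i * (2 * (inner ℝ (v i) h : ℝ))) (2 * (inner ℝ h Sv : ℝ)) := by
      have h1 := (hinner h).mul_left 2
      refine h1.congr_fun fun i => ?_
      rw [real_inner_smul_right, real_inner_comm]
      ring
    have hAsum : HasSum (fun i => σ i * ‖v i‖^2) (F xb) := by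
      have h1 : (fun i => σ i * ‖v i‖^2) = fun i => σ i * (infDist (xb + a i) (T i))^2 := by
        funext i; rw [hvnorm i]
      rw [h1, hFdef]
      exact (hFsum xb).hasSum
    have hCsum : HasSum (fun i => σ i * ‖h‖^2) (‖h‖^2) := by
      have := sigma_hasSum.mul_right (‖h‖^2)
      simpa [hσdef] using this
    have hRHS : HasSum (fun i => σ i * (‖v i‖^2 + 2*(inner ℝ (v i) h : ℝ) + ‖h‖^2))
        (F xb + 2 * (inner ℝ h Sv : ℝ) + ‖h‖^2) := by
      have := (hAsum.add hBsum).add hCsum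
      refine this.congr_fun fun i => ?_
      ring
    have hup : F (xb + h) ≤ F xb + 2 * (inner ℝ h Sv : ℝ) + ‖h‖^2 := by
      have hterm : ∀ i, σ i * (infDist (xb + h + a i) (T i))^2 ≤
          σ i * (‖v i‖^2 + 2*(inner ℝ (v i) h : ℝ) + ‖h‖^2) := by
        intro i
        have heqv : xb + h + a i - wt i = v i + h := by rw [hvdef]; beta_reduce; abel
        have hd : infDist (xb + h + a i) (T i) ≤ ‖v i + h‖ := by
          calc infDist (xb + h + a i) (T i) ≤ dist (xb + h + a i) (wt i) :=
                infDist_le_dist_of_mem (hwtmem i)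
            _ = ‖v i + h‖ := by rw [dist_eq_norm, heqv]
        have hexp : ‖v i + h‖^2 = ‖v i‖^2 + 2*(inner ℝ (v i) h : ℝ) + ‖h‖^2 :=
          norm_add_sq_real _ _
        have h0 : 0 ≤ infDist (xb + h + a i) (T i) := infDist_nonneg
        have h2 := pow_le_pow_left₀ h0 hd 2
        rw [hexp] at h2
        exact mul_le_mul_of_nonneg_left h2 (sigma_pos i).le
      have hle := Summable.tsum_le_tsum hterm (hFsum (xb + h)) hRHS.summable
      rw [hRHS.tsum_eq] at hle
      exact hle
    have hlow := hglob (xb + h)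
    linarith
  have hSv0 : Sv = 0 := by
    have h1 := hkey (-Sv)
    rw [norm_neg, inner_neg_left] at h1
    have h2 : (inner ℝ Sv Sv : ℝ) = ‖Sv‖^2 := real_inner_self_eq_norm_sq Sv
    rw [h2] at h1
    have h3 : ‖Sv‖^2 ≤ 0 := by linarith
    have h4 : ‖Sv‖ = 0 := by
      have := sq_nonneg ‖Sv‖
      have h5 : ‖Sv‖^2 = 0 := le_antisymm h3 this
      exact (pow_eq_zero_iff two_ne_zero).mp h5
    exact norm_eq_zero.mp h4
  -- prox inequality for the scaled normals
  have hprox : ∀ i, ∀ x ∈ T i,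
      (inner ℝ (r⁻¹ • v i) (x - wt i) : ℝ) ≤ (2*r)⁻¹ * ‖x - wt i‖^2 := by
    intro i x hx
    have hmin' : ∀ xx ∈ T i, dist (xb + a i) (wt i) ≤ dist (xb + a i) xx :=
      fun xx hxx => (hwtd i) ▸ infDist_le_dist_of_mem hxx
    have hpx := prox_of_nearest hmin' x hx
    have heq : xb + a i - wt i = v i := by rw [hvdef]
    rw [heq] at hpx
    rw [real_inner_smul_left]
    calc r⁻¹ * (inner ℝ (v i) (x - wt i) : ℝ) ≤ r⁻¹ * (‖x - wt i‖^2/2) :=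
        mul_le_mul_of_nonneg_left hpx (inv_nonneg.mpr hrpos.le)
      _ = (2*r)⁻¹ * ‖x - wt i‖^2 := by rw [mul_inv]; ring
  have hKpos : 0 < (2*r)⁻¹ := inv_pos.mpr (by linarith)
  refine ⟨fun i => r⁻¹ • v i, fun i => ?_, fun i => ?_, ?_, ?_⟩
  · exact mem_limitingNormalCone_zero_of_prox (hTcone i) (hwtmem i) hKpos (hprox i)
  · exact mem_limitingNormalCone_of_prox_contingent (hΩ i) (hx₀ i) (hwtmem i) hKpos (hprox i)
  · have h1 := hSv.const_smul (r⁻¹)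
    rw [hSv0, smul_zero] at h1
    refine h1.congr_fun fun i => ?_
    rw [smul_comm]
    congr 1
    rw [hσdef]
    norm_num
    rw [one_div, inv_pow]
  · have hAsum : HasSum (fun i => σ i * ‖v i‖^2) (F xb) := by
      have h1 : (fun i => σ i * ‖v i‖^2) = fun i => σ i * (infDist (xb + a i) (T i))^2 := by
        funext i; rw [hvnorm i]
      rw [h1, hFdef]
      exact (hFsum xb).hasSum
    have h2 := hAsum.mul_left ((F xb)⁻¹)
    rw [inv_mul_cancel₀ hFxb0.ne'] at h2
    refine h2.congr_fun fun i => ?_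
    have h3 : ‖r⁻¹ • v i‖^2 = (F xb)⁻¹ * ‖v i‖^2 := by
      rw [norm_smul, Real.norm_of_nonneg (inv_nonneg.mpr hrpos.le), mul_pow, ← hr2, inv_pow]
    rw [h3, hσdef]
    have h4 : ((1:ℝ) / 2 ^ (i+1)) = ((1:ℝ)/2)^(i+1) := by
      rw [div_pow, one_pow]
    rw [h4]
    ring

end AuxLemmas

/-- contingent extremal principle for countable systems of closed sets
in finite dimensions. -/
theorem contingent_extremal_principle (n : ℕ)
    (Ω : ℕ → Set (EuclideanSpace ℝ (Fin n))) (hΩ : ∀ i, IsClosed (Ω i))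
    (x₀ : EuclideanSpace ℝ (Fin n)) (hx₀ : ∀ i, x₀ ∈ Ω i)
    (hext : ∃ a : ℕ → EuclideanSpace ℝ (Fin n), (∃ M : ℝ, ∀ i, ‖a i‖ ≤ M) ∧
      ⋂ i, (contingentCone x₀ (Ω i)).translate (a i) = ∅)
    (hnonover : ⋂ i, contingentCone x₀ (Ω i) = {0}) :
    ∃ x : ℕ → EuclideanSpace ℝ (Fin n),
      (∀ i, x i ∈ limitingNormalCone (contingentCone x₀ (Ω i)) 0) ∧
      (∀ i, x i ∈ limitingNormalCone (Ω i) x₀) ∧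
      HasSum (fun i => (1 / 2 ^ (i + 1) : ℝ) • x i) 0 ∧
      HasSum (fun i => (1 / 2 ^ (i + 1) : ℝ) * ‖x i‖ ^ 2) 1 := by
  obtain ⟨a, ⟨M, hM⟩, hempty⟩ := hext
  rcases Nat.eq_zero_or_pos n with rfl|hn
  · exfalso
    have h0 : (0 : EuclideanSpace ℝ (Fin 0)) ∈
        ⋂ i, (contingentCone x₀ (Ω i)).translate (a i) := by
      refine Set.mem_iInter.mpr fun i => ?_
      show (0 : EuclideanSpace ℝ (Fin 0)) + a i ∈ contingentCone x₀ (Ω i)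
      have h1 : (0 : EuclideanSpace ℝ (Fin 0)) + a i = 0 := Subsingleton.elim _ _
      rw [h1]
      exact zero_mem_contingentCone (hx₀ i)
    rw [hempty] at h0
    exact h0
  · haveI : Nontrivial (EuclideanSpace ℝ (Fin n)) := by
      refine Module.nontrivial_of_finrank_pos (R := ℝ) ?_
      rw [finrank_euclideanSpace_fin]
      exact hn
    exact aux_main Ω hΩ x₀ hx₀ a M hM hempty hnonover
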